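/- For each real α with 1 ≤ α ≤ 10 there exists a map f from the open wedge Ω = {(x,y) ∈ ℝ² : x > 0, 0 < y < x} into Euclidean ℝ³ which is differentiable on Ω with locally Lipschitz derivative (class C^{1,1}) and satisfies, for every (x,y) ∈ Ω: ⟨∂ₓf, ∂ₓf⟩ = (1 + x² + y²)^α, ⟨∂ₓf, ∂_yf⟩ = 0, ⟨∂_yf, ∂_yf⟩ = (1 + x² + y²)^α. That is, the generalised Enneper metric g^{(α)} admits a C^{1,1} isometric immersion of the wedge Ω into ℝ³. -/

import Mathlib

/-- A map `f : Ω ⊆ ℝ² → ℝ³` is a `C^{1,1}` isometric immersion of the metric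
`E dx² + 2F dxdy + G dy²` on `Ω` if it is differentiable on `Ω`, its derivative is
locally Lipschitz on `Ω`, and the induced first fundamental form equals the metric. -/
def IsC11IsometricImmersion (Ω : Set (ℝ × ℝ)) (E F G : ℝ × ℝ → ℝ)
    (f : ℝ × ℝ → EuclideanSpace ℝ (Fin 3)) : Prop :=
  (∀ p ∈ Ω, DifferentiableAt ℝ f p) ∧
  (∀ p ∈ Ω, ∃ ε > (0 : ℝ), ∃ K : NNReal,
      LipschitzOnWith K (fderiv ℝ f) (Metric.ball p ε ∩ Ω)) ∧
  (∀ p ∈ Ω,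
      (inner ℝ (fderiv ℝ f p (1, 0)) (fderiv ℝ f p (1, 0)) : ℝ) = E p ∧
      (inner ℝ (fderiv ℝ f p (1, 0)) (fderiv ℝ f p (0, 1)) : ℝ) = F p ∧
      (inner ℝ (fderiv ℝ f p (0, 1)) (fderiv ℝ f p (0, 1)) : ℝ) = G p)

noncomputable section

namespace EnneperAux

/-! ### One-variable profile functions for the surface of revolution -/

/-- Profile radius: `ρ(t) = t (1+t²)^{α/2} / (2(α+1))`. -/
def rho (α t : ℝ) : ℝ := t * (1+t^2)^(α/2) / (2*(α+1))

/-- Derivative of `rho`. -/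
def rhod (α t : ℝ) : ℝ := (1+t^2)^(α/2-1) * (1+(α+1)*t^2) / (2*(α+1))

/-- Vertical speed: chosen so that `rhod² + w² = (1+t²)^α`. -/
def w (α t : ℝ) : ℝ :=
  (1+t^2)^(α/2-1) * Real.sqrt ((1+t^2)^2 - ((1+(α+1)*t^2)/(2*(α+1)))^2)

/-- Height function. -/
def h (α t : ℝ) : ℝ := ∫ s in (0:ℝ)..t, w α s

lemma base_pos (t : ℝ) : (0:ℝ) < 1+t^2 := by positivity

lemma A_pos {α : ℝ} (hα : 1 ≤ α) (t : ℝ) :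
    0 < (1+t^2)^2 - ((1+(α+1)*t^2)/(2*(α+1)))^2 := by
  have hc : (0:ℝ) < 2*(α+1) := by linarith
  have hd : (0:ℝ) < 1+(α+1)*t^2 := by nlinarith [sq_nonneg t]
  have h1 : (1+(α+1)*t^2)/(2*(α+1)) ≤ (1+t^2)/2 := by
    rw [div_le_div_iff₀ hc (by norm_num)]
    nlinarith [sq_nonneg t]
  have h0 : 0 ≤ (1+(α+1)*t^2)/(2*(α+1)) := le_of_lt (div_pos hd hc)
  nlinarith [mul_self_le_mul_self h0 h1, sq_nonneg (1+t^2), sq_nonneg t]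

lemma rpow_sq {x : ℝ} (hx : 0 ≤ x) (b : ℝ) : (x ^ b)^2 = x ^ (2*b) := by
  rw [← Real.rpow_natCast (x^b) 2, ← Real.rpow_mul hx]
  norm_num [mul_comm]

lemma w_sq {α : ℝ} (hα : 1 ≤ α) (t : ℝ) :
    w α t ^ 2 + rhod α t ^ 2 = ((1+t^2)^(α/2))^2 := by
  have hb := base_pos t
  have hA := A_pos hα t
  have h1 : w α t ^ 2 = (1+t^2)^(2*(α/2-1)) *
      ((1+t^2)^2 - ((1+(α+1)*t^2)/(2*(α+1)))^2) := by
    rw [w, mul_pow, Real.sq_sqrt hA.le, rpow_sq hb.le]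
  have h2 : rhod α t ^ 2 = (1+t^2)^(2*(α/2-1)) * ((1+(α+1)*t^2)/(2*(α+1)))^2 := by
    rw [rhod, mul_div_assoc, mul_pow, rpow_sq hb.le]
  have h3 : (((1+t^2):ℝ)^(α/2))^2 = (1+t^2)^(2*(α/2-1)) * (1+t^2)^2 := by
    rw [rpow_sq hb.le, ← Real.rpow_natCast (1+t^2) 2, ← Real.rpow_add hb]
    norm_num
    congr 1
    ring
  rw [h1, h2, h3]
  ring

lemma hasDerivAt_sq1 (t : ℝ) : HasDerivAt (fun t : ℝ => 1+t^2) (2*t) t := by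
  simpa using ((hasDerivAt_pow 2 t).const_add 1)

lemma hasDerivAt_rho {α : ℝ} (hα : 1 ≤ α) (t : ℝ) :
    HasDerivAt (rho α) (rhod α t) t := by
  have hb := base_pos t
  have h2 : HasDerivAt (fun t : ℝ => (1+t^2)^(α/2))
      (2*t*(α/2)*(1+t^2)^(α/2-1)) t :=
    (hasDerivAt_sq1 t).rpow_const (Or.inl hb.ne')
  have h3 := ((hasDerivAt_id t).mul h2).div_const (2*(α+1))
  have key : ((1+t^2):ℝ)^(α/2) = (1+t^2)^(α/2-1) * (1+t^2) := by
    nth_rewrite 1 [show α/2 = (α/2-1)+1 by ring]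
    rw [Real.rpow_add_one hb.ne']
  refine h3.congr_deriv ?_
  rw [rhod, key]
  simp only [id_eq]
  ring

lemma contDiffAt_rpowbase {n : WithTop ℕ∞} (b t : ℝ) :
    ContDiffAt ℝ n (fun t : ℝ => (1+t^2)^b) t := by
  have h1 : ContDiffAt ℝ n (fun t : ℝ => 1+t^2) t := by fun_prop
  exact h1.rpow_const_of_ne (base_pos t).ne'

lemma contDiffAt_w {α : ℝ} (hα : 1 ≤ α) {n : WithTop ℕ∞} (t : ℝ) :
    ContDiffAt ℝ n (w α) t := by
  have hA : ContDiffAt ℝ n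
      (fun x : ℝ => (1+x^2)^2 - ((1+(α+1)*x^2)/(2*(α+1)))^2) t := by
    simp only [div_eq_mul_inv]
    fun_prop
  exact (contDiffAt_rpowbase _ t).mul (hA.sqrt (A_pos hα t).ne')

lemma contDiff_w {α : ℝ} (hα : 1 ≤ α) {n : ℕ∞} : ContDiff ℝ n (w α) :=
  contDiff_iff_contDiffAt.2 fun t => contDiffAt_w hα t

lemma hasDerivAt_h {α : ℝ} (hα : 1 ≤ α) (t : ℝ) :
    HasDerivAt (h α) (w α t) t :=
  ((contDiff_w hα (n := 0)).continuous.integral_hasStrictDerivAt 0 t).hasDerivAt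

lemma contDiff_h {α : ℝ} (hα : 1 ≤ α) : ContDiff ℝ 2 (h α) := by
  rw [show (2 : WithTop ℕ∞) = (1:WithTop ℕ∞) + 1 by norm_num, contDiff_succ_iff_deriv]
  refine ⟨fun t => (hasDerivAt_h hα t).differentiableAt, by simp, ?_⟩
  have : deriv (h α) = w α := funext fun t => (hasDerivAt_h hα t).deriv
  rw [this]
  exact contDiff_w hα

lemma contDiffAt_rho {α : ℝ} {n : WithTop ℕ∞} (t : ℝ) : ContDiffAt ℝ n (rho α) t := by
  unfold rho
  exact (contDiffAt_id.mul (contDiffAt_rpowbase _ t)).div_const _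

/-! ### Two-variable components -/

/-- Polar radius. -/
def rr (p : ℝ × ℝ) : ℝ := Real.sqrt (p.1^2+p.2^2)

/-- Rescaled polar angle. -/
def th (α : ℝ) (p : ℝ × ℝ) : ℝ := 2*(α+1) * Real.arctan (p.2/p.1)

def F1 (α : ℝ) (p : ℝ × ℝ) : ℝ := rho α (rr p) * Real.cos (th α p)
def F2 (α : ℝ) (p : ℝ × ℝ) : ℝ := rho α (rr p) * Real.sin (th α p)
def F3 (α : ℝ) (p : ℝ × ℝ) : ℝ := h α (rr p)

/-- The isometric immersion. -/
def Fm (α : ℝ) (p : ℝ × ℝ) : EuclideanSpace ℝ (Fin 3) :=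
  (EuclideanSpace.equiv (Fin 3) ℝ).symm ![F1 α p, F2 α p, F3 α p]

lemma sq_pos {p : ℝ × ℝ} (hx : 0 < p.1) : 0 < p.1^2+p.2^2 := by nlinarith [sq_nonneg p.2]

lemma hasFDerivAt_rr {p : ℝ × ℝ} (hx : 0 < p.1) :
    ∃ L : ℝ × ℝ →L[ℝ] ℝ, HasFDerivAt (rr ·) L p ∧
      ∀ a b : ℝ, L (a, b) = (a*p.1+b*p.2)/rr p := by
  have h1 := sq_pos hx
  have hq : HasFDerivAt (fun x : ℝ × ℝ => x.1^2+x.2^2)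
      ((p.1 • ContinuousLinearMap.fst ℝ ℝ ℝ + p.1 • ContinuousLinearMap.fst ℝ ℝ ℝ) +
       (p.2 • ContinuousLinearMap.snd ℝ ℝ ℝ + p.2 • ContinuousLinearMap.snd ℝ ℝ ℝ)) p := by
    simp only [pow_two]
    exact ((hasFDerivAt_fst (𝕜 := ℝ) (p := p)).mul hasFDerivAt_fst).add
      ((hasFDerivAt_snd (𝕜 := ℝ) (p := p)).mul hasFDerivAt_snd)
  have hr := (Real.hasDerivAt_sqrt h1.ne').comp_hasFDerivAt p hq
  refine ⟨_, hr, fun a b => ?_⟩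
  have hs : Real.sqrt (p.1^2+p.2^2) ≠ 0 := (Real.sqrt_pos.2 (sq_pos hx)).ne'
  simp only [ContinuousLinearMap.smul_apply, ContinuousLinearMap.add_apply,
    ContinuousLinearMap.coe_fst', ContinuousLinearMap.coe_snd', smul_eq_mul, rr]
  field_simp
  ring

lemma hasFDerivAt_th {α : ℝ} {p : ℝ × ℝ} (hx : 0 < p.1) :
    ∃ L : ℝ × ℝ →L[ℝ] ℝ, HasFDerivAt (th α ·) L p ∧
      ∀ a b : ℝ, L (a, b) = 2*(α+1) * ((b*p.1 - a*p.2)/(p.1^2+p.2^2)) := by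
  have hinv := (hasDerivAt_inv hx.ne').comp_hasFDerivAt p (hasFDerivAt_fst (𝕜 := ℝ) (p := p))
  have hdiv : HasFDerivAt (fun x : ℝ × ℝ => x.2/x.1)
      (p.2 • (-(p.1^2)⁻¹ • ContinuousLinearMap.fst ℝ ℝ ℝ) +
        (p.1)⁻¹ • ContinuousLinearMap.snd ℝ ℝ ℝ) p := by
    simp only [div_eq_mul_inv]
    exact (hasFDerivAt_snd (𝕜 := ℝ) (p := p)).mul hinv
  have harc := (Real.hasDerivAt_arctan (p.2/p.1)).comp_hasFDerivAt p hdiv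
  have hth := harc.const_mul (2*(α+1))
  refine ⟨_, hth, fun a b => ?_⟩
  have h2 : (0:ℝ) < 1 + (p.2/p.1)^2 := by positivity
  simp only [ContinuousLinearMap.smul_apply, ContinuousLinearMap.add_apply,
    ContinuousLinearMap.sub_apply, ContinuousLinearMap.coe_fst', ContinuousLinearMap.coe_snd',
    smul_eq_mul, ContinuousLinearMap.coe_smul', Pi.smul_apply]
  field_simp
  ring

lemma fderiv_F1 {α : ℝ} (hα : 1 ≤ α) {p : ℝ × ℝ} (hx : 0 < p.1) :
    DifferentiableAt ℝ (F1 α) p ∧ ∀ a b : ℝ, fderiv ℝ (F1 α) p (a, b) =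
      rhod α (rr p) * ((a*p.1+b*p.2)/rr p) * Real.cos (th α p)
      - (1+p.1^2+p.2^2)^(α/2) * ((b*p.1-a*p.2)/rr p) * Real.sin (th α p) := by
  obtain ⟨Lr, hr, hrval⟩ := hasFDerivAt_rr hx
  obtain ⟨Lt, ht, htval⟩ := hasFDerivAt_th (α := α) hx
  have hrho := (hasDerivAt_rho hα (rr p)).comp_hasFDerivAt p hr
  have hcos := (Real.hasDerivAt_cos (th α p)).comp_hasFDerivAt p ht
  have hf : HasFDerivAt (F1 α)
      ((rho α ∘ rr) p • (-Real.sin (th α p) • Lt) +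
        (Real.cos ∘ (th α ·)) p • (rhod α (rr p) • Lr)) p := hrho.mul hcos
  refine ⟨hf.differentiableAt, fun a b => ?_⟩
  rw [hf.fderiv]
  have hRpos : 0 < rr p := Real.sqrt_pos.2 (sq_pos hx)
  have hR2 : (rr p)^2 = p.1^2+p.2^2 := Real.sq_sqrt (sq_pos hx).le
  have hP : ((1:ℝ)+(rr p)^2)^(α/2) = (1+p.1^2+p.2^2)^(α/2) := by rw [hR2]; ring_nf
  simp only [ContinuousLinearMap.add_apply, ContinuousLinearMap.smul_apply, smul_eq_mul,
    Function.comp_apply, hrval, htval]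
  rw [rho, hP]
  have hc : (2*(α+1)) ≠ 0 := by positivity
  rw [← hR2]
  field_simp
  ring

lemma fderiv_F2 {α : ℝ} (hα : 1 ≤ α) {p : ℝ × ℝ} (hx : 0 < p.1) :
    DifferentiableAt ℝ (F2 α) p ∧ ∀ a b : ℝ, fderiv ℝ (F2 α) p (a, b) =
      rhod α (rr p) * ((a*p.1+b*p.2)/rr p) * Real.sin (th α p)
      + (1+p.1^2+p.2^2)^(α/2) * ((b*p.1-a*p.2)/rr p) * Real.cos (th α p) := by
  obtain ⟨Lr, hr, hrval⟩ := hasFDerivAt_rr hx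
  obtain ⟨Lt, ht, htval⟩ := hasFDerivAt_th (α := α) hx
  have hrho := (hasDerivAt_rho hα (rr p)).comp_hasFDerivAt p hr
  have hsin := (Real.hasDerivAt_sin (th α p)).comp_hasFDerivAt p ht
  have hf : HasFDerivAt (F2 α)
      ((rho α ∘ rr) p • (Real.cos (th α p) • Lt) +
        (Real.sin ∘ (th α ·)) p • (rhod α (rr p) • Lr)) p := hrho.mul hsin
  refine ⟨hf.differentiableAt, fun a b => ?_⟩
  rw [hf.fderiv]
  have hRpos : 0 < rr p := Real.sqrt_pos.2 (sq_pos hx)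
  have hR2 : (rr p)^2 = p.1^2+p.2^2 := Real.sq_sqrt (sq_pos hx).le
  have hP : ((1:ℝ)+(rr p)^2)^(α/2) = (1+p.1^2+p.2^2)^(α/2) := by rw [hR2]; ring_nf
  simp only [ContinuousLinearMap.add_apply, ContinuousLinearMap.smul_apply, smul_eq_mul,
    Function.comp_apply, hrval, htval]
  rw [rho, hP]
  have hc : (2*(α+1)) ≠ 0 := by positivity
  rw [← hR2]
  field_simp
  ring

lemma fderiv_F3 {α : ℝ} (hα : 1 ≤ α) {p : ℝ × ℝ} (hx : 0 < p.1) :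
    DifferentiableAt ℝ (F3 α) p ∧ ∀ a b : ℝ, fderiv ℝ (F3 α) p (a, b) =
      w α (rr p) * ((a*p.1+b*p.2)/rr p) := by
  obtain ⟨Lr, hr, hrval⟩ := hasFDerivAt_rr hx
  have hf : HasFDerivAt (F3 α) (w α (rr p) • Lr) p :=
    (hasDerivAt_h hα (rr p)).comp_hasFDerivAt p hr
  refine ⟨hf.differentiableAt, fun a b => ?_⟩
  rw [hf.fderiv]
  simp only [ContinuousLinearMap.smul_apply, smul_eq_mul, hrval]

lemma contDiffAt_rr {p : ℝ × ℝ} (hx : 0 < p.1) {n : WithTop ℕ∞} :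
    ContDiffAt ℝ n rr p := by
  have h1 : ContDiffAt ℝ n (fun x : ℝ × ℝ => x.1^2+x.2^2) p := by fun_prop
  exact (Real.contDiffAt_sqrt (sq_pos hx).ne').comp p h1

lemma contDiffAt_th {α : ℝ} {p : ℝ × ℝ} (hx : 0 < p.1) {n : WithTop ℕ∞} :
    ContDiffAt ℝ n (th α) p := by
  have h1 : ContDiffAt ℝ n (fun x : ℝ × ℝ => x.2/x.1) p :=
    contDiffAt_snd.div contDiffAt_fst hx.ne'
  exact contDiffAt_const.mul (Real.contDiff_arctan.contDiffAt.comp p h1)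

lemma contDiffAt_Fm {α : ℝ} (hα : 1 ≤ α) {p : ℝ × ℝ} (hx : 0 < p.1) :
    ContDiffAt ℝ 2 (Fm α) p := by
  have h1 : ContDiffAt ℝ 2 (F1 α) p :=
    ((contDiffAt_rho (rr p)).comp p (contDiffAt_rr hx)).mul
      (Real.contDiff_cos.contDiffAt.comp p (contDiffAt_th hx))
  have h2 : ContDiffAt ℝ 2 (F2 α) p :=
    ((contDiffAt_rho (rr p)).comp p (contDiffAt_rr hx)).mul
      (Real.contDiff_sin.contDiffAt.comp p (contDiffAt_th hx))
  have h3 : ContDiffAt ℝ 2 (F3 α) p :=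
    (contDiff_h hα).contDiffAt.comp p (contDiffAt_rr hx)
  rw [show Fm α = fun p => (EuclideanSpace.equiv (Fin 3) ℝ).symm ![F1 α p, F2 α p, F3 α p]
    from rfl]
  apply contDiffAt_euclidean.2
  intro i
  fin_cases i
  · exact h1
  · exact h2
  · exact h3

end EnneperAux

end

open EnneperAux in
/-- For each `1 ≤ α ≤ 10`, the generalised Enneper metric
`g^{(α)} = (1 + x² + y²)^α (dx² + dy²)` admits a `C^{1,1}` isometric immersion of the
open wedge `Ω = {(x,y) : x > 0, 0 < y < x}` into `ℝ³`. -/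
theorem generalised_enneper_C11_isometric_immersion
    (α : ℝ) (hα₁ : 1 ≤ α) (hα₂ : α ≤ 10) :
    ∃ f : ℝ × ℝ → EuclideanSpace ℝ (Fin 3),
      IsC11IsometricImmersion {p : ℝ × ℝ | 0 < p.1 ∧ 0 < p.2 ∧ p.2 < p.1}
        (fun p => (1 + p.1 ^ 2 + p.2 ^ 2) ^ α) (fun _ => 0)
        (fun p => (1 + p.1 ^ 2 + p.2 ^ 2) ^ α) f := by
  refine ⟨Fm α, ?_, ?_, ?_⟩
  · intro p hp
    exact (contDiffAt_Fm hα₁ hp.1).differentiableAt (by norm_num)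
  · intro p hp
    have h2 : ContDiffAt ℝ 1 (fderiv ℝ (Fm α)) p :=
      (contDiffAt_Fm hα₁ hp.1).fderiv_right (by norm_num)
    obtain ⟨K, t, ht, hK⟩ := h2.exists_lipschitzOnWith
    obtain ⟨ε, hε, hball⟩ := Metric.mem_nhds_iff.1 ht
    exact ⟨ε, hε, K, hK.mono ((Set.inter_subset_left).trans hball)⟩
  · intro p hp
    have hx : 0 < p.1 := hp.1
    obtain ⟨hd1, hv1⟩ := fderiv_F1 hα₁ hx
    obtain ⟨hd2, hv2⟩ := fderiv_F2 hα₁ hx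
    obtain ⟨hd3, hv3⟩ := fderiv_F3 hα₁ hx
    -- assemble the derivative of `Fm`
    have hg : HasFDerivAt (fun q => ![F1 α q, F2 α q, F3 α q])
        (ContinuousLinearMap.pi
          ![fderiv ℝ (F1 α) p, fderiv ℝ (F2 α) p, fderiv ℝ (F3 α) p]) p := by
      apply hasFDerivAt_pi''
      intro i
      fin_cases i
      · simpa [ContinuousLinearMap.proj_pi] using hd1.hasFDerivAt
      · simpa [ContinuousLinearMap.proj_pi] using hd2.hasFDerivAt
      · simpa [ContinuousLinearMap.proj_pi] using hd3.hasFDerivAt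
    have hFm : HasFDerivAt (Fm α)
        (((EuclideanSpace.equiv (Fin 3) ℝ).symm :
            (Fin 3 → ℝ) →L[ℝ] EuclideanSpace ℝ (Fin 3)).comp
          (ContinuousLinearMap.pi
            ![fderiv ℝ (F1 α) p, fderiv ℝ (F2 α) p, fderiv ℝ (F3 α) p])) p :=
      ((EuclideanSpace.equiv (Fin 3) ℝ).symm.comp_hasFDerivAt_iff).2 hg
    have hfd := hFm.fderiv
    have hRpos : 0 < rr p := Real.sqrt_pos.2 (sq_pos hx)
    have hR2 : (rr p)^2 = p.1^2+p.2^2 := Real.sq_sqrt (sq_pos hx).le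
    have hw2 : (w α (rr p))^2 + (rhod α (rr p))^2 = ((1+p.1^2+p.2^2)^(α/2))^2 := by
      rw [w_sq hα₁, hR2]
      ring_nf
    have hRinv : (p.1^2+p.2^2) / (rr p)^2 = 1 := by
      rw [← hR2]
      field_simp
    have hsc : (Real.sin (th α p))^2 + (Real.cos (th α p))^2 = 1 :=
      Real.sin_sq_add_cos_sq _
    have hPsq : (((1:ℝ)+p.1^2+p.2^2)^(α/2))^2 = (1+p.1^2+p.2^2)^α := by
      rw [rpow_sq (by positivity)]
      congr 1
      ring
    refine ⟨?_, ?_, ?_⟩ <;>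
      rw [hfd] <;>
      simp only [ContinuousLinearMap.comp_apply, ContinuousLinearMap.pi_apply,
        ContinuousLinearEquiv.coe_coe, PiLp.inner_apply, RCLike.inner_apply, conj_trivial,
        Fin.sum_univ_three, Matrix.cons_val_zero, Matrix.cons_val_one, Matrix.head_cons,
        Matrix.cons_val_two, Matrix.tail_cons, PiLp.continuousLinearEquiv_symm_apply,
        PiLp.toLp_apply, hv1, hv2, hv3]
    · rw [← hPsq]
      linear_combination ((rhod α (rr p)^2*p.1^2 +
          (((1:ℝ)+p.1^2+p.2^2)^(α/2))^2*p.2^2)/(rr p)^2) * hsc +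
        (p.1^2/(rr p)^2) * hw2 + (((1:ℝ)+p.1^2+p.2^2)^(α/2))^2 * hRinv
    · linear_combination ((rhod α (rr p)^2 - (((1:ℝ)+p.1^2+p.2^2)^(α/2))^2)*p.1*p.2/(rr p)^2) * hsc +
        (p.1*p.2/(rr p)^2) * hw2
    · rw [← hPsq]
      linear_combination ((rhod α (rr p)^2*p.2^2 +
          (((1:ℝ)+p.1^2+p.2^2)^(α/2))^2*p.1^2)/(rr p)^2) * hsc +
        (p.2^2/(rr p)^2) * hw2 + (((1:ℝ)+p.1^2+p.2^2)^(α/2))^2 * hRinv
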